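/- Let E be a 2n-dimensional F₂-vector space with nondegenerate symplectic form, and let Z be the set of pairs (x, ȳ) with x ∈ E and ȳ ∈ E/F₂x. Define the matrix M indexed by Z × Z by M_{(x,ȳ),(x',ȳ')} = 0 if ⟨x,x'⟩ ≠ 0 and M_{(x,ȳ),(x',ȳ')} = 2^{-2n+2}(-1)^{⟨x',y⟩+⟨x,y'⟩}(δ_{x,0}+1)⁻¹(δ_{x',0}+1)⁻¹ if ⟨x,x'⟩ = 0, where y, y' are representatives of ȳ, ȳ'. Then M² is block-diagonal with blocks indexed by x ∈ E, and the block for x equals (2-δ_{x,0})(2I - |E/F₂x|⁻¹ J), where J is the all-ones matrix indexed by E/F₂x. -/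

import Mathlib

open scoped Classical

/-- `δ_{x,0}` as a real number. -/
noncomputable def del {E : Type*} [Zero E] (x : E) : ℝ := if x = 0 then 1 else 0

namespace Stmt7Aux

noncomputable def chi (a : ZMod 2) : ℝ := (-1 : ℝ) ^ a.val

noncomputable def eps (a : ZMod 2) : ℝ := if a = 0 then 1 else 0

lemma zmod2_two_eq_zero : (1 + 1 : ZMod 2) = 0 := by decide

lemma zmod2_add_eq_zero : ∀ s u : ZMod 2, s + u = 0 → s = u := by decide

lemma zmod2_cases (a : ZMod 2) : a = 0 ∨ a = 1 := by revert a; decide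

lemma chi_zero : chi 0 = 1 := by norm_num [chi, show (0 : ZMod 2).val = 0 from rfl]

lemma chi_one : chi 1 = -1 := by norm_num [chi, show (1 : ZMod 2).val = 1 from rfl]

lemma chi_add (a b : ZMod 2) : chi (a + b) = chi a * chi b := by
  rcases zmod2_cases a with ha | ha <;> rcases zmod2_cases b with hb | hb <;>
      subst ha <;> subst hb
  · rw [add_zero, chi_zero]; ring
  · rw [zero_add, chi_zero]; ring
  · rw [add_zero, chi_zero]; ring
  · rw [show (1 + 1 : ZMod 2) = 0 by decide, chi_zero, chi_one]; ring

lemma chi_sq (a : ZMod 2) : chi a * chi a = 1 := by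
  rcases zmod2_cases a with ha | ha <;> subst ha <;> norm_num [chi_zero, chi_one]

lemma eps_sq (a : ZMod 2) : eps a * eps a = eps a := by
  unfold eps; split <;> norm_num

lemma eps_eq (a : ZMod 2) : eps a = (1 + chi a) / 2 := by
  rcases zmod2_cases a with ha | ha <;> subst ha <;>
    norm_num [eps, chi_zero, chi_one, show (1 : ZMod 2) ≠ 0 by decide]

lemma charsum {E : Type*} [AddCommGroup E] [Module (ZMod 2) E] [Fintype E]
    (B : E →ₗ[ZMod 2] E →ₗ[ZMod 2] ZMod 2)
    (hnd : ∀ x, (∀ y, B x y = 0) → x = 0) (v : E) :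
    ∑ w : E, chi (B v w) = if v = 0 then (Fintype.card E : ℝ) else 0 := by
  split_ifs with h
  · subst h
    simp [map_zero B, chi_zero]
  · obtain ⟨w₀, hw₀⟩ : ∃ w, B v w ≠ 0 := by
      by_contra hc; push_neg at hc; exact h (hnd v hc)
    have h1 : B v w₀ = 1 := by
      rcases zmod2_cases (B v w₀) with h' | h'
      · exact absurd h' hw₀
      · exact h'
    have key : ∑ w : E, chi (B v (w + w₀)) = ∑ w : E, chi (B v w) :=
      Fintype.sum_equiv (Equiv.addRight w₀) _ _ (fun w => rfl)
    simp only [map_add, chi_add, h1, chi_one] at key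
    have : ∑ w : E, chi (B v w) * -1 = -∑ w : E, chi (B v w) := by
      rw [← Finset.sum_neg_distrib]
      exact Finset.sum_congr rfl fun w _ => by ring
    rw [this] at key
    linarith

lemma sum_quot {E : Type*} [AddCommGroup E] [Module (ZMod 2) E] [Fintype E]
    (p : Submodule (ZMod 2) E) [Fintype (E ⧸ p)] (f : E ⧸ p → ℝ) :
    ∑ w : E, f (Submodule.Quotient.mk w) = (Nat.card p : ℝ) * ∑ b : E ⧸ p, f b := by
  have hcard : ∀ b : E ⧸ p,
      (Finset.univ.filter fun w : E => (Submodule.Quotient.mk w : E ⧸ p) = b).card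
        = Nat.card p := by
    intro b
    rw [← Fintype.card_subtype, ← Nat.card_eq_fintype_card]
    obtain ⟨b₀, rfl⟩ := Submodule.Quotient.mk_surjective p b
    refine Nat.card_congr
      ⟨fun w => ⟨w.1 - b₀, (Submodule.Quotient.eq p).mp w.2⟩,
       fun s => ⟨b₀ + s.1, by rw [Submodule.Quotient.eq]; simpa using s.2⟩,
       fun w => Subtype.ext (by simp), fun s => Subtype.ext (by simp)⟩
  rw [← Finset.sum_fiberwise' Finset.univ
      (fun w : E => (Submodule.Quotient.mk w : E ⧸ p)) f, Finset.mul_sum]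
  refine Finset.sum_congr rfl fun b _ => ?_
  rw [Finset.sum_const, hcard b, nsmul_eq_mul]

lemma sum_quot' {E : Type*} [AddCommGroup E] [Module (ZMod 2) E] [Fintype E]
    (p : Submodule (ZMod 2) E) [Fintype (E ⧸ p)] (f : E ⧸ p → ℝ) :
    ∑ b : E ⧸ p, f b = (Nat.card p : ℝ)⁻¹ * ∑ w : E, f (Submodule.Quotient.mk w) := by
  have hpos : 0 < Nat.card p := Nat.card_pos
  rw [sum_quot p f]
  field_simp

lemma card_span {E : Type*} [AddCommGroup E] [Module (ZMod 2) E] (x : E) :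
    Nat.card (Submodule.span (ZMod 2) {x}) = if x = 0 then 1 else 2 := by
  haveI : Fact (Nat.Prime 2) := ⟨Nat.prime_two⟩
  split_ifs with h
  · subst h
    rw [Submodule.span_zero_singleton]
    exact Nat.card_unique
  · rw [← Nat.card_congr (LinearEquiv.toSpanNonzeroSingleton (ZMod 2) E x h).toEquiv,
      Nat.card_eq_fintype_card, ZMod.card]

lemma mem_span_iff {E : Type*} [AddCommGroup E] [Module (ZMod 2) E] (x u : E) :
    u ∈ Submodule.span (ZMod 2) {x} ↔ u = 0 ∨ u = x := by
  rw [Submodule.mem_span_singleton]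
  constructor
  · rintro ⟨c, rfl⟩
    rcases zmod2_cases c with h | h <;> subst h <;> simp
  · rintro (rfl | rfl)
    · exact ⟨0, by simp⟩
    · exact ⟨1, by simp⟩

end Stmt7Aux

/- Fourier matrix of the Heisenberg example: `M²` is block diagonal with blocks
indexed by `x ∈ E`, the block at `x` being `(2-δ_{x,0})(2·I - |E/F₂x|⁻¹·J)`. -/
set_option maxHeartbeats 1000000 in
open Stmt7Aux in
theorem stmt7 (n : ℕ) (hn : 1 ≤ n)
    (E : Type*) [AddCommGroup E] [Module (ZMod 2) E] [Finite E]
    (hdim : Module.finrank (ZMod 2) E = 2 * n)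
    (B : E →ₗ[ZMod 2] E →ₗ[ZMod 2] ZMod 2)
    (halt : ∀ x, B x x = 0)
    (hnondeg : ∀ x, (∀ y, B x y = 0) → x = 0)
    (M : (Σ x : E, E ⧸ Submodule.span (ZMod 2) {x}) →
         (Σ x : E, E ⧸ Submodule.span (ZMod 2) {x}) → ℝ)
    (hM0 : ∀ (x x' y y' : E), B x x' ≠ 0 →
      M ⟨x, Submodule.Quotient.mk y⟩ ⟨x', Submodule.Quotient.mk y'⟩ = 0)
    (hM1 : ∀ (x x' y y' : E), B x x' = 0 →
      M ⟨x, Submodule.Quotient.mk y⟩ ⟨x', Submodule.Quotient.mk y'⟩ =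
        (2 : ℝ) ^ (-(2 * n : ℤ) + 2) * (-1 : ℝ) ^ ((B x' y).val + (B x y').val) *
          (del x + 1)⁻¹ * (del x' + 1)⁻¹) :
    (∀ (x x' : E), x ≠ x' →
      ∀ (yb : E ⧸ Submodule.span (ZMod 2) {x}) (ybb : E ⧸ Submodule.span (ZMod 2) {x'}),
        ∑ᶠ z : (Σ x : E, E ⧸ Submodule.span (ZMod 2) {x}),
          M ⟨x, yb⟩ z * M z ⟨x', ybb⟩ = 0) ∧
    (∀ (x : E) (yb ybb : E ⧸ Submodule.span (ZMod 2) {x}),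
      ∑ᶠ z : (Σ x : E, E ⧸ Submodule.span (ZMod 2) {x}),
        M ⟨x, yb⟩ z * M z ⟨x, ybb⟩ =
          (2 - del x) * (2 * (if yb = ybb then 1 else 0) -
            ((Nat.card (E ⧸ Submodule.span (ZMod 2) {x}) : ℝ))⁻¹)) := by
  haveI : Fact (Nat.Prime 2) := ⟨Nat.prime_two⟩
  haveI : Fintype E := Fintype.ofFinite E
  have h2 : (2:ℝ) ≠ 0 := two_ne_zero
  have ht0 : (0:ℝ) < 2 ^ (2*n) := by positivity
  set t : ℝ := 2 ^ (2*n) with htdef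
  have htne : t ≠ 0 := ne_of_gt ht0
  -- characteristic two facts
  have hadd : ∀ a : E, a + a = 0 := by
    intro a
    have h : a + a = (1 + 1 : ZMod 2) • a := by rw [add_smul, one_smul]
    rw [h, zmod2_two_eq_zero, zero_smul]
  have hneg : ∀ a : E, -a = a := fun a => neg_eq_of_add_eq_zero_left (hadd a)
  have hsym : ∀ a b : E, B a b = B b a := by
    intro a b
    have h := halt (a + b)
    simp only [map_add, LinearMap.add_apply, halt a, halt b, zero_add, add_zero] at h
    exact (zmod2_add_eq_zero _ _ h).symm
  -- cardinality of E
  have hcardE : Fintype.card E = 2 ^ (2 * n) := by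
    rw [Module.card_eq_pow_finrank (K := ZMod 2) (V := E), ZMod.card, hdim]
  have hcs : ∀ v : E, ∑ w : E, chi (B v w) = if v = 0 then t else 0 := by
    intro v
    rw [charsum B hnondeg v, hcardE]
    split_ifs <;> [push_cast; skip] <;> ring
  have hpow : (2:ℝ) ^ (-(2 * n : ℤ) + 2) = 4 / t := by
    have h : (-(2 * n : ℤ) + 2) = (2 : ℤ) - (2 * n : ℕ) := by push_cast; ring
    rw [h, zpow_sub₀ h2, zpow_natCast, htdef]
    norm_num
  -- the key computation
  have key : ∀ (x x' y y' : E),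
      (∑ᶠ z : (Σ x : E, E ⧸ Submodule.span (ZMod 2) {x}),
        M ⟨x, Submodule.Quotient.mk y⟩ z * M z ⟨x', Submodule.Quotient.mk y'⟩) =
      if x = x' then
        (del x + 1)⁻¹ * (del x + 1)⁻¹ *
          (4 * ((if y + y' = 0 then (1:ℝ) else 0) + (if x + (y + y') = 0 then (1:ℝ) else 0))
            - 4 / t)
      else 0 := by
    intro x x' y y'
    -- pointwise evaluation of the product
    have hT : ∀ z w : E,
        M ⟨x, Submodule.Quotient.mk y⟩ ⟨z, Submodule.Quotient.mk w⟩ *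
          M ⟨z, Submodule.Quotient.mk w⟩ ⟨x', Submodule.Quotient.mk y'⟩ =
        ((4 / t) * (4 / t) * (del x + 1)⁻¹ * (del x' + 1)⁻¹ * eps (B x z) * eps (B z x') *
          ((del z + 1)⁻¹ * (del z + 1)⁻¹) * chi (B z (y + y'))) *
        (chi (B x w) * chi (B x' w)) := by
      intro z w
      by_cases h1 : B x z = 0
      · by_cases hb2 : B z x' = 0
        · rw [hM1 x z y w h1, hM1 z x' w y' hb2, hpow]
          have e1 : eps (B x z) = 1 := by simp [eps, h1]
          have e2 : eps (B z x') = 1 := by simp [eps, hb2]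
          rw [e1, e2, map_add, chi_add, pow_add, pow_add]
          simp only [chi]
          ring
        · rw [hM0 z x' w y' hb2]
          have : eps (B z x') = 0 := by simp [eps, hb2]
          rw [this]; ring
      · rw [hM0 x z y w h1]
        have : eps (B x z) = 0 := by simp [eps, h1]
        rw [this]; ring
    have hWW : (∑ w : E, chi (B x w) * chi (B x' w)) = if x = x' then t else 0 := by
      have e : ∀ w : E, chi (B x w) * chi (B x' w) = chi (B (x + x') w) := by
        intro w
        rw [map_add, LinearMap.add_apply, chi_add]
      rw [Finset.sum_congr rfl fun w _ => e w, hcs (x + x')]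
      by_cases hxe : x = x'
      · subst hxe
        rw [if_pos (hadd x), if_pos rfl]
      · rw [if_neg hxe, if_neg]
        intro hc
        have hx2 : x = -x' := add_eq_zero_iff_eq_neg.mp hc
        rw [hneg x'] at hx2
        exact hxe hx2
    have hinner : ∀ z : E,
        (∑ wb : E ⧸ Submodule.span (ZMod 2) {z},
          M ⟨x, Submodule.Quotient.mk y⟩ ⟨z, wb⟩ *
            M ⟨z, wb⟩ ⟨x', Submodule.Quotient.mk y'⟩) =
        (Nat.card (Submodule.span (ZMod 2) {z}) : ℝ)⁻¹ *
          (((4 / t) * (4 / t) * (del x + 1)⁻¹ * (del x' + 1)⁻¹ * eps (B x z) * eps (B z x') *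
            ((del z + 1)⁻¹ * (del z + 1)⁻¹) * chi (B z (y + y'))) *
          (if x = x' then t else 0)) := by
      intro z
      rw [sum_quot' (Submodule.span (ZMod 2) {z})
        (fun wb => M ⟨x, Submodule.Quotient.mk y⟩ ⟨z, wb⟩ *
            M ⟨z, wb⟩ ⟨x', Submodule.Quotient.mk y'⟩)]
      congr 1
      rw [Finset.sum_congr rfl fun w _ => hT z w, ← Finset.mul_sum, hWW]
    rw [finsum_eq_sum_of_fintype, ← Finset.univ_sigma_univ, Finset.sum_sigma,
      Finset.sum_congr rfl fun z _ => hinner z]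
    by_cases hxe : x = x'
    · subst hxe
      rw [if_pos rfl, if_pos rfl]
      -- character sums in z
      have hgu : (∑ z : E, chi (B z (y + y'))) = if y + y' = 0 then t else 0 := by
        rw [← hcs (y + y')]
        exact Finset.sum_congr rfl fun z _ => by rw [hsym]
      have hgxu : (∑ z : E, chi (B x z) * chi (B z (y + y'))) =
          if x + (y + y') = 0 then t else 0 := by
        rw [← hcs (x + (y + y'))]
        refine Finset.sum_congr rfl fun z _ => ?_
        rw [map_add B x (y + y'), LinearMap.add_apply, chi_add, hsym z (y + y')]
      -- pointwise normalization of the z-summand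
      have hdelx : (0:ℝ) ≤ del x := by unfold del; split <;> norm_num
      have hdx : del x + 1 ≠ 0 := by linarith
      have hpt : ∀ z : E,
          (Nat.card (Submodule.span (ZMod 2) {z}) : ℝ)⁻¹ *
            (((4 / t) * (4 / t) * (del x + 1)⁻¹ * (del x + 1)⁻¹ * eps (B x z) * eps (B z x) *
              ((del z + 1)⁻¹ * (del z + 1)⁻¹) * chi (B z (y + y'))) * t) =
          (8 / t) * ((del x + 1)⁻¹ * (del x + 1)⁻¹) *
            ((1/2) * chi (B z (y + y')) + (1/2) * (chi (B x z) * chi (B z (y + y')))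
              - (1/2) * (if z = 0 then (1:ℝ) else 0)) := by
        intro z
        rw [card_span, hsym z x]
        by_cases hz : z = 0
        · subst hz
          rw [if_pos rfl, if_pos rfl]
          have e0 : eps (B x 0) = 1 := by simp [eps, map_zero]
          have c0 : chi ((B (0:E)) (y + y')) = 1 := by
            rw [map_zero B, LinearMap.zero_apply, chi_zero]
          have c1 : chi (B x (0:E)) = 1 := by rw [map_zero (B x), chi_zero]
          have hd0 : del (0:E) = 1 := if_pos rfl
          rw [e0, c0, c1, hd0]
          push_cast
          field_simp
          ring
        · rw [if_neg hz, if_neg hz]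
          have hdz : del z = 0 := if_neg hz
          rw [hdz]
          by_cases hb : B x z = 0
          · have he : eps (B x z) = 1 := if_pos hb
            have hc : chi (B x z) = 1 := by rw [hb, chi_zero]
            rw [he, hc]
            push_cast
            field_simp
            ring
          · have he : eps (B x z) = 0 := if_neg hb
            have hb1 : B x z = 1 := by
              rcases zmod2_cases (B x z) with h | h
              · exact absurd h hb
              · exact h
            have hc : chi (B x z) = -1 := by rw [hb1, chi_one]
            rw [he, hc]
            push_cast
            field_simp
            ring
      rw [Finset.sum_congr rfl fun z _ => hpt z, ← Finset.mul_sum,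
        Finset.sum_sub_distrib, Finset.sum_add_distrib, ← Finset.mul_sum, ← Finset.mul_sum,
        ← Finset.mul_sum, hgu, hgxu]
      have hsum0 : (∑ z : E, if z = 0 then (1:ℝ) else 0) = 1 := by
        rw [Finset.sum_ite_eq' Finset.univ (0:E) fun _ => (1:ℝ), if_pos (Finset.mem_univ _)]
      rw [hsum0]
      have hI0 : (if y + y' = 0 then t else 0) = t * (if y + y' = 0 then (1:ℝ) else 0) := by
        split_ifs <;> ring
      have hI1 : (if x + (y + y') = 0 then t else 0)
          = t * (if x + (y + y') = 0 then (1:ℝ) else 0) := by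
        split_ifs <;> ring
      rw [hI0, hI1]
      generalize (if y + y' = 0 then (1:ℝ) else 0) = I0
      generalize (if x + (y + y') = 0 then (1:ℝ) else 0) = I1
      field_simp
      ring
    · rw [if_neg hxe]
      simp only [if_neg hxe, mul_zero, Finset.sum_const_zero]
  constructor
  · intro x x' hxx' yb ybb
    obtain ⟨y, rfl⟩ := Submodule.Quotient.mk_surjective _ yb
    obtain ⟨y', rfl⟩ := Submodule.Quotient.mk_surjective _ ybb
    rw [key x x' y y', if_neg hxx']
  · intro x yb ybb
    obtain ⟨y, rfl⟩ := Submodule.Quotient.mk_surjective _ yb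
    obtain ⟨y', rfl⟩ := Submodule.Quotient.mk_surjective _ ybb
    rw [key x x y y', if_pos rfl]
    have hdelx : (0:ℝ) ≤ del x := by unfold del; split <;> norm_num
    have hdx : del x + 1 ≠ 0 := by linarith
    by_cases hx0 : x = 0
    · subst hx0
      have hN : (Nat.card (E ⧸ Submodule.span (ZMod 2) {(0:E)}) : ℝ) = t := by
        have h := Submodule.card_eq_card_quotient_mul_card (Submodule.span (ZMod 2) {(0:E)})
        rw [Nat.card_eq_fintype_card, hcardE, card_span, if_pos rfl, one_mul] at h
        rw [htdef, ← h]
        push_cast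
        ring
      have hiff : ((Submodule.Quotient.mk y : E ⧸ Submodule.span (ZMod 2) {(0:E)})
          = Submodule.Quotient.mk y') ↔ (y + y' = 0) := by
        rw [Submodule.Quotient.eq, mem_span_iff, sub_eq_add_neg, hneg y', or_self]
      have hd0 : del (0:E) = 1 := if_pos rfl
      simp only [zero_add]
      rw [if_congr hiff rfl rfl, hN, hd0]
      by_cases hu : y + y' = 0
      · rw [if_pos hu]
        field_simp
        ring
      · rw [if_neg hu]
        field_simp
        ring
    · have hN : (Nat.card (E ⧸ Submodule.span (ZMod 2) {x}) : ℝ) = t / 2 := by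
        have h := Submodule.card_eq_card_quotient_mul_card (Submodule.span (ZMod 2) {x})
        rw [Nat.card_eq_fintype_card, hcardE, card_span, if_neg hx0] at h
        have h' : ((2:ℝ)) ^ (2*n) = 2 * (Nat.card (E ⧸ Submodule.span (ZMod 2) {x}) : ℝ) := by
          exact_mod_cast h
        rw [htdef]
        linarith
      have hiff : ((Submodule.Quotient.mk y : E ⧸ Submodule.span (ZMod 2) {x})
          = Submodule.Quotient.mk y') ↔ (y + y' = 0 ∨ y + y' = x) := by
        rw [Submodule.Quotient.eq, sub_eq_add_neg, hneg y', mem_span_iff]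
      have hI1 : (x + (y + y') = 0) ↔ (y + y' = x) := by
        constructor
        · intro h
          have h2' := add_eq_zero_iff_eq_neg.mp h
          rw [hneg] at h2'
          exact h2'.symm
        · intro h
          rw [h]
          exact hadd x
      have hd0 : del x = 0 := if_neg hx0
      rw [if_congr hiff rfl rfl, if_congr hI1 rfl rfl, hN, hd0]
      by_cases h0 : y + y' = 0
      · have h1 : ¬ (y + y' = x) := by rw [h0]; exact fun hc => hx0 hc.symm
        rw [if_pos h0, if_neg h1, if_pos (Or.inl h0)]
        field_simp
        ring
      · by_cases h1 : y + y' = x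
        · rw [if_neg h0, if_pos h1, if_pos (Or.inr h1)]
          field_simp
          ring
        · rw [if_neg h0, if_neg h1, if_neg (by rintro (h | h); exact h0 h; exact h1 h)]
          field_simp
          ring
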